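/- arXiv:1405.1773 — 4 statements merged into one kernel-verified Lean document; each statement's English description precedes it below -/
import Mathlib

section
/- Let e1, e2 be the standard basis of ℝ². Let U = e1⊗e2⊗e2 + e2⊗e1⊗e2 + e2⊗e2⊗e1 ∈ ℝ^{2×2×2}. Then the tensor spectral norm of U equals 2/√3, i.e., the maximum of ⟨U, u⊗v⊗w⟩ over unit vectors u,v,w ∈ ℝ² is 2/√3. -/
open scoped BigOperators

noncomputable def enorm {d : ℕ} (u : Fin d → ℝ) : ℝ := Real.sqrt (∑ i, (u i)^2)

def tOuter {d1 d2 d3 : ℕ} (u : Fin d1 → ℝ) (v : Fin d2 → ℝ) (w : Fin d3 → ℝ) :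
    Fin d1 → Fin d2 → Fin d3 → ℝ := fun a b c => u a * v b * w c

noncomputable def tinner {d1 d2 d3 : ℕ} (X Y : Fin d1 → Fin d2 → Fin d3 → ℝ) : ℝ :=
  ∑ a, ∑ b, ∑ c, X a b c * Y a b c

noncomputable def specNorm {d1 d2 d3 : ℕ} (X : Fin d1 → Fin d2 → Fin d3 → ℝ) : ℝ :=
  sSup {t : ℝ | ∃ u v w, enorm u ≤ 1 ∧ enorm v ≤ 1 ∧ enorm w ≤ 1 ∧
    t = tinner X (tOuter u v w)}

noncomputable def hsNorm {d1 d2 d3 : ℕ} (X : Fin d1 → Fin d2 → Fin d3 → ℝ) : ℝ :=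
  Real.sqrt (tinner X X)

noncomputable def nucNorm {d1 d2 d3 : ℕ} (X : Fin d1 → Fin d2 → Fin d3 → ℝ) : ℝ :=
  sSup {t : ℝ | ∃ Y, specNorm Y ≤ 1 ∧ t = tinner Y X}

noncomputable def maxNorm {d1 d2 d3 : ℕ} (X : Fin d1 → Fin d2 → Fin d3 → ℝ) : ℝ :=
  sSup {t : ℝ | ∃ a b c, t = |X a b c|}

noncomputable def e2 (i : Fin 2) : Fin 2 → ℝ := fun j => if j = i then 1 else 0

lemma matrix_bound (y z a b : ℝ) (h1 : y^2 + z^2 ≤ 1) (h2 : a^2 + b^2 ≤ 1) :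
    (z*b)^2 + (z*a + y*b)^2 ≤ 4/3 := by
  have h1' : z^2 ≤ 1 - y^2 := by linarith
  have h2' : b^2 ≤ 1 - a^2 := by linarith
  have hy2 : y^2 ≤ 1 := by nlinarith [sq_nonneg z]
  have ha2 : a^2 ≤ 1 := by nlinarith [sq_nonneg b]
  set p := |y*a| with hp_def
  set q := |z*b| with hq_def
  have hpn : 0 ≤ p := abs_nonneg _
  have hqn : 0 ≤ q := abs_nonneg _
  have hp2 : p^2 = y^2*a^2 := by rw [hp_def, sq_abs]; ring
  have hq2eq : q^2 = z^2*b^2 := by rw [hq_def, sq_abs]; ring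
  have hp : 2*p ≤ y^2 + a^2 := by
    rw [hp_def, abs_mul]
    nlinarith [sq_nonneg (|y| - |a|), sq_abs y, sq_abs a]
  have hprod : z^2*b^2 ≤ (1-y^2)*(1-a^2) :=
    mul_le_mul h1' h2' (sq_nonneg b) (by linarith)
  have hq2 : q^2 ≤ (1-p)^2 := by rw [hq2eq]; nlinarith
  have hp1 : p ≤ 1 := by nlinarith
  have hq : q ≤ 1 - p := by nlinarith
  have habs : y*z*a*b ≤ p*q := by
    calc y*z*a*b ≤ |y*z*a*b| := le_abs_self _
    _ = p*q := by rw [hp_def, hq_def, ← abs_mul]; ring_nf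
  have key : 2*(y*z*a*b) ≤ 1/3 + y^2*a^2 := by nlinarith [sq_nonneg (3*p - 1)]
  nlinarith [mul_nonneg (sq_nonneg z) (sub_nonneg.2 h2),
    mul_nonneg (sq_nonneg y) (sub_nonneg.2 h2)]

lemma scalar_bound (u0 u1 v0 v1 w0 w1 : ℝ)
    (hu : u0^2 + u1^2 ≤ 1) (hv : v0^2 + v1^2 ≤ 1) (hw : w0^2 + w1^2 ≤ 1) :
    u0*v1*w1 + u1*v0*w1 + u1*v1*w0 ≤ 2 / Real.sqrt 3 := by
  have hs : (0:ℝ) < Real.sqrt 3 := Real.sqrt_pos.2 (by norm_num)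
  have hs2 : (Real.sqrt 3)^2 = 3 := Real.sq_sqrt (by norm_num)
  obtain ⟨A, hA⟩ : ∃ A : ℝ, A = w1*v1 := ⟨_, rfl⟩
  obtain ⟨B, hB⟩ : ∃ B : ℝ, B = w1*v0 + w0*v1 := ⟨_, rfl⟩
  have hAB : A^2 + B^2 ≤ 4/3 := by
    have h := matrix_bound w0 w1 v0 v1 hw hv
    rw [hA, hB]; nlinarith [h]
  have hf : u0*v1*w1 + u1*v0*w1 + u1*v1*w0 = u0*A + u1*B := by rw [hA, hB]; ring
  rw [hf]
  have hcs : (u0*A + u1*B)^2 ≤ (u0^2 + u1^2) * (A^2 + B^2) := by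
    nlinarith [sq_nonneg (u0*B - u1*A)]
  have hsq : (u0*A + u1*B)^2 ≤ 4/3 := by
    nlinarith [mul_nonneg (by linarith : (0:ℝ) ≤ 1 - (u0^2 + u1^2))
      (add_nonneg (sq_nonneg A) (sq_nonneg B))]
  rcases le_or_gt (u0*A + u1*B) 0 with h | h
  · have hpos : (0:ℝ) < 2 / Real.sqrt 3 := by positivity
    exact h.trans hpos.le
  · rw [le_div_iff₀ hs]
    have h3 : ((u0*A + u1*B) * Real.sqrt 3)^2 ≤ 4 := by
      rw [mul_pow, hs2]; linarith
    nlinarith [h3, mul_pos h hs]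

theorem specNorm_U_eq :
    specNorm (tOuter (e2 0) (e2 1) (e2 1) + tOuter (e2 1) (e2 0) (e2 1)
      + tOuter (e2 1) (e2 1) (e2 0)) = 2 / Real.sqrt 3 := by
  have hs : (0:ℝ) < Real.sqrt 3 := Real.sqrt_pos.2 (by norm_num)
  have hs2 : (Real.sqrt 3)^2 = 3 := Real.sq_sqrt (by norm_num)
  have hr2 : (Real.sqrt 2)^2 = 2 := Real.sq_sqrt (by norm_num)
  set S := {t : ℝ | ∃ u v w : Fin 2 → ℝ, _root_.enorm u ≤ 1 ∧ _root_.enorm v ≤ 1 ∧ _root_.enorm w ≤ 1 ∧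
    t = tinner (tOuter (e2 0) (e2 1) (e2 1) + tOuter (e2 1) (e2 0) (e2 1)
      + tOuter (e2 1) (e2 1) (e2 0)) (tOuter u v w)} with hS
  have hval : ∀ u v w : Fin 2 → ℝ,
      tinner (tOuter (e2 0) (e2 1) (e2 1) + tOuter (e2 1) (e2 0) (e2 1)
        + tOuter (e2 1) (e2 1) (e2 0)) (tOuter u v w)
      = u 0 * v 1 * w 1 + u 1 * v 0 * w 1 + u 1 * v 1 * w 0 := by
    intro u v w
    simp [tinner, tOuter, e2, Fin.sum_univ_two]
    ring
  have hnorm : ∀ u : Fin 2 → ℝ, _root_.enorm u ≤ 1 → (u 0)^2 + (u 1)^2 ≤ 1 := by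
    intro u hu
    unfold _root_.enorm at hu
    have hsum : (0:ℝ) ≤ ∑ i, (u i)^2 := Finset.sum_nonneg fun i _ => sq_nonneg _
    have : (Real.sqrt (∑ i, (u i)^2))^2 ≤ 1 := by
      have h0 := Real.sqrt_nonneg (∑ i, (u i)^2)
      nlinarith [hu, h0]
    rw [Real.sq_sqrt hsum, Fin.sum_univ_two] at this
    exact this
  -- membership
  have hmem : 2 / Real.sqrt 3 ∈ S := by
    refine ⟨![1/Real.sqrt 3, Real.sqrt 2/Real.sqrt 3],
      ![1/Real.sqrt 3, Real.sqrt 2/Real.sqrt 3],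
      ![1/Real.sqrt 3, Real.sqrt 2/Real.sqrt 3], ?_, ?_, ?_, ?_⟩ <;>
    · first
      | (show _root_.enorm _ ≤ 1
         unfold _root_.enorm
         rw [Fin.sum_univ_two]
         have : (![1/Real.sqrt 3, Real.sqrt 2/Real.sqrt 3] 0)^2
             + (![1/Real.sqrt 3, Real.sqrt 2/Real.sqrt 3] 1)^2 = 1 := by
           simp [Matrix.cons_val_zero, Matrix.cons_val_one]
           field_simp
           nlinarith [hs2, hr2]
         rw [this, Real.sqrt_one])
      | (rw [hval]
         simp [Matrix.cons_val_zero, Matrix.cons_val_one]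
         field_simp
         nlinarith [hs2, hr2, hs])
  have hub : ∀ t ∈ S, t ≤ 2 / Real.sqrt 3 := by
    rintro t ⟨u, v, w, hu, hv, hw, rfl⟩
    rw [hval]
    exact scalar_bound (u 0) (u 1) (v 0) (v 1) (w 0) (w 1)
      (hnorm u hu) (hnorm v hv) (hnorm w hw)
  have hbdd : BddAbove S := ⟨2 / Real.sqrt 3, hub⟩
  exact le_antisymm (csSup_le ⟨_, hmem⟩ hub) (le_csSup hbdd hmem)
end

section
/- Let X ∈ ℝ^{d1×d2×d3} admit a bi-orthogonal decomposition X = Σ_{i=1}^r λ_i (u_i ⊗ v_i ⊗ w_i) with λ_i ≠ 0 and u_i^⊤u_j = δ_{ij}, v_i^⊤v_j · w_i^⊤w_j = δ_{ij} for all i,j (i.e., u_i orthonormal and the pairs (v_i,w_i) bi-orthogonal). Then the tensor nuclear norm satisfies ‖X‖_* = Σ_{i=1}^r ‖λ_i v_i ⊗ w_i‖_HS — equivalently, writing the decomposition as Σ_i u_i ⊗ w̃_i with matrices w̃_i, one has ‖X‖_* = Σ_i ‖w̃_i‖_HS. -/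
open scoped BigOperators

lemma enorm_nonneg' {d : ℕ} (x : Fin d → ℝ) : 0 ≤ _root_.enorm x := Real.sqrt_nonneg _

lemma sum_sq_le_one' {d : ℕ} {x : Fin d → ℝ} (h : _root_.enorm x ≤ 1) : ∑ a, (x a)^2 ≤ 1 := by
  have h0 : (0:ℝ) ≤ ∑ a, (x a)^2 := Finset.sum_nonneg fun a _ => sq_nonneg _
  rw [_root_.enorm] at h
  nlinarith [Real.sq_sqrt h0, Real.sqrt_nonneg (∑ a, (x a)^2)]

lemma abs_le_enorm' {d : ℕ} (x : Fin d → ℝ) (a : Fin d) : |x a| ≤ _root_.enorm x := by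
  rw [_root_.enorm, ← Real.sqrt_sq_eq_abs]
  exact Real.sqrt_le_sqrt (Finset.single_le_sum (fun i _ => sq_nonneg (x i))
    (Finset.mem_univ a))

lemma triple_factor {d1 d2 d3 : ℕ} (A : Fin d1 → ℝ) (B : Fin d2 → ℝ) (C : Fin d3 → ℝ) :
    (∑ a, A a) * (∑ b, B b) * (∑ c, C c) = ∑ a, ∑ b, ∑ c, A a * B b * C c := by
  rw [Finset.sum_mul_sum, Finset.sum_mul]
  refine Finset.sum_congr rfl fun a _ => ?_
  rw [Finset.sum_mul]
  refine Finset.sum_congr rfl fun b _ => ?_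
  rw [Finset.mul_sum]

lemma sum_swap4 {d1 d2 d3 r : ℕ} (F : Fin d1 → Fin d2 → Fin d3 → Fin r → ℝ) :
    (∑ a, ∑ b, ∑ c, ∑ i, F a b c i) = ∑ i, ∑ a, ∑ b, ∑ c, F a b c i :=
  calc (∑ a, ∑ b, ∑ c, ∑ i, F a b c i)
      = ∑ a, ∑ b, ∑ i, ∑ c, F a b c i := by
        exact Finset.sum_congr rfl fun a _ => Finset.sum_congr rfl fun b _ =>
          Finset.sum_comm
    _ = ∑ a, ∑ i, ∑ b, ∑ c, F a b c i :=
        Finset.sum_congr rfl fun a _ => Finset.sum_comm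
    _ = ∑ i, ∑ a, ∑ b, ∑ c, F a b c i := Finset.sum_comm

lemma tinner_sumform {d1 d2 d3 r : ℕ} (g : Fin r → ℝ) (p : Fin r → Fin d1 → ℝ)
    (q : Fin r → Fin d2 → ℝ) (s : Fin r → Fin d3 → ℝ)
    (x : Fin d1 → ℝ) (y : Fin d2 → ℝ) (z : Fin d3 → ℝ) :
    tinner (fun a b c => ∑ i, g i * p i a * q i b * s i c) (tOuter x y z)
      = ∑ i, g i * (∑ a, p i a * x a) * (∑ b, q i b * y b) * (∑ c, s i c * z c) := by
  unfold tinner tOuter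
  calc (∑ a, ∑ b, ∑ c, (∑ i, g i * p i a * q i b * s i c) * (x a * y b * z c))
      = ∑ a, ∑ b, ∑ c, ∑ i, (g i * p i a * q i b * s i c) * (x a * y b * z c) := by
        exact Finset.sum_congr rfl fun a _ => Finset.sum_congr rfl fun b _ =>
          Finset.sum_congr rfl fun c _ => Finset.sum_mul _ _ _
    _ = ∑ i, ∑ a, ∑ b, ∑ c, (g i * p i a * q i b * s i c) * (x a * y b * z c) :=
        sum_swap4 _
    _ = ∑ i, g i * (∑ a, p i a * x a) * (∑ b, q i b * y b) * (∑ c, s i c * z c) := by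
        refine Finset.sum_congr rfl fun i _ => ?_
        symm
        rw [show g i * (∑ a, p i a * x a) = ∑ a, g i * (p i a * x a) from
          Finset.mul_sum _ _ _, triple_factor]
        exact Finset.sum_congr rfl fun a _ => Finset.sum_congr rfl fun b _ =>
          Finset.sum_congr rfl fun c _ => by ring

lemma tinner_linear2 {d1 d2 d3 r : ℕ} (Y : Fin d1 → Fin d2 → Fin d3 → ℝ)
    (lam : Fin r → ℝ) (u : Fin r → Fin d1 → ℝ) (v : Fin r → Fin d2 → ℝ)
    (w : Fin r → Fin d3 → ℝ) :
    tinner Y (fun a b c => ∑ j, lam j * u j a * v j b * w j c)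
      = ∑ j, lam j * tinner Y (tOuter (u j) (v j) (w j)) := by
  unfold tinner tOuter
  calc (∑ a, ∑ b, ∑ c, Y a b c * ∑ j, lam j * u j a * v j b * w j c)
      = ∑ a, ∑ b, ∑ c, ∑ j, Y a b c * (lam j * u j a * v j b * w j c) := by
        exact Finset.sum_congr rfl fun a _ => Finset.sum_congr rfl fun b _ =>
          Finset.sum_congr rfl fun c _ => Finset.mul_sum _ _ _
    _ = ∑ j, ∑ a, ∑ b, ∑ c, Y a b c * (lam j * u j a * v j b * w j c) := sum_swap4 _
    _ = ∑ j, lam j * ∑ a, ∑ b, ∑ c, Y a b c * (u j a * v j b * w j c) := by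
        refine Finset.sum_congr rfl fun j _ => ?_
        rw [Finset.mul_sum]
        refine Finset.sum_congr rfl fun a _ => ?_
        rw [Finset.mul_sum]
        refine Finset.sum_congr rfl fun b _ => ?_
        rw [Finset.mul_sum]
        exact Finset.sum_congr rfl fun c _ => by ring

lemma specSet_nonempty {d1 d2 d3 : ℕ} (Y : Fin d1 → Fin d2 → Fin d3 → ℝ) :
    Set.Nonempty {t : ℝ | ∃ u v w, _root_.enorm u ≤ 1 ∧ _root_.enorm v ≤ 1 ∧ _root_.enorm w ≤ 1 ∧
      t = tinner Y (tOuter u v w)} := by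
  refine ⟨tinner Y (tOuter 0 0 0), 0, 0, 0, ?_, ?_, ?_, rfl⟩ <;>
    simp [_root_.enorm]

lemma specSet_bddAbove {d1 d2 d3 : ℕ} (Y : Fin d1 → Fin d2 → Fin d3 → ℝ) :
    BddAbove {t : ℝ | ∃ u v w, _root_.enorm u ≤ 1 ∧ _root_.enorm v ≤ 1 ∧ _root_.enorm w ≤ 1 ∧
      t = tinner Y (tOuter u v w)} := by
  refine ⟨∑ a, ∑ b, ∑ c, |Y a b c|, ?_⟩
  rintro t ⟨x, y, z, hx, hy, hz, rfl⟩
  unfold tinner tOuter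
  refine Finset.sum_le_sum fun a _ => Finset.sum_le_sum fun b _ =>
    Finset.sum_le_sum fun c _ => ?_
  have h1 : |x a| ≤ 1 := le_trans (abs_le_enorm' x a) hx
  have h2 : |y b| ≤ 1 := le_trans (abs_le_enorm' y b) hy
  have h3 : |z c| ≤ 1 := le_trans (abs_le_enorm' z c) hz
  calc Y a b c * (x a * y b * z c) ≤ |Y a b c * (x a * y b * z c)| := le_abs_self _
    _ = |Y a b c| * (|x a| * |y b| * |z c|) := by rw [abs_mul, abs_mul, abs_mul]
    _ ≤ |Y a b c| * 1 := by
        refine mul_le_mul_of_nonneg_left ?_ (abs_nonneg _)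
        exact mul_le_one₀ (mul_le_one₀ h1 (abs_nonneg _) h2) (abs_nonneg _) h3
    _ = |Y a b c| := mul_one _

lemma le_specNorm' {d1 d2 d3 : ℕ} (Y : Fin d1 → Fin d2 → Fin d3 → ℝ)
    {x : Fin d1 → ℝ} {y : Fin d2 → ℝ} {z : Fin d3 → ℝ}
    (hx : _root_.enorm x ≤ 1) (hy : _root_.enorm y ≤ 1) (hz : _root_.enorm z ≤ 1) :
    tinner Y (tOuter x y z) ≤ specNorm Y :=
  le_csSup (specSet_bddAbove Y) ⟨x, y, z, hx, hy, hz, rfl⟩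

lemma enorm_neg' {d : ℕ} (x : Fin d → ℝ) : _root_.enorm (fun a => -x a) = _root_.enorm x := by
  simp [_root_.enorm]

lemma abs_tinner_le_one {d1 d2 d3 : ℕ} {Y : Fin d1 → Fin d2 → Fin d3 → ℝ}
    (hY : specNorm Y ≤ 1) {x : Fin d1 → ℝ} {y : Fin d2 → ℝ} {z : Fin d3 → ℝ}
    (hx : _root_.enorm x ≤ 1) (hy : _root_.enorm y ≤ 1) (hz : _root_.enorm z ≤ 1) :
    |tinner Y (tOuter x y z)| ≤ 1 := by
  rw [abs_le]
  constructor
  · have h := le_trans (le_specNorm' Y (x := fun a => -x a) (by rw [enorm_neg']; exact hx) hy hz) hY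
    have e : tinner Y (tOuter (fun a => -x a) y z) = -tinner Y (tOuter x y z) := by
      unfold tinner tOuter
      rw [← Finset.sum_neg_distrib]
      refine Finset.sum_congr rfl fun a _ => ?_
      rw [← Finset.sum_neg_distrib]
      refine Finset.sum_congr rfl fun b _ => ?_
      rw [← Finset.sum_neg_distrib]
      exact Finset.sum_congr rfl fun c _ => by ring
    rw [e] at h
    linarith
  · exact le_trans (le_specNorm' Y hx hy hz) hY

lemma bessel' {ι : Type*} [Fintype ι] {r : ℕ} (f : Fin r → ι → ℝ) (x : ι → ℝ)
    (horth : ∀ i j, (∑ a, f i a * f j a) = if i = j then 1 else 0) :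
    ∑ i, (∑ a, f i a * x a)^2 ≤ ∑ a, (x a)^2 := by
  set c : Fin r → ℝ := fun i => ∑ a, f i a * x a with hc
  have e1 : ∑ a, (∑ i, c i * f i a) * x a = ∑ i, (c i)^2 := by
    calc (∑ a, (∑ i, c i * f i a) * x a)
        = ∑ a, ∑ i, c i * f i a * x a := by
          exact Finset.sum_congr rfl fun a _ => Finset.sum_mul _ _ _
      _ = ∑ i, ∑ a, c i * f i a * x a := Finset.sum_comm
      _ = ∑ i, (c i)^2 := by
          refine Finset.sum_congr rfl fun i _ => ?_
          calc (∑ a, c i * f i a * x a) = c i * ∑ a, f i a * x a := by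
                rw [Finset.mul_sum]
                exact Finset.sum_congr rfl fun a _ => by ring
            _ = (c i)^2 := by
                have h : (∑ a, f i a * x a) = c i := rfl
                rw [h]; ring
  have e2 : ∑ a, (∑ i, c i * f i a)^2 = ∑ i, (c i)^2 := by
    calc (∑ a, (∑ i, c i * f i a)^2)
        = ∑ a, ∑ i, ∑ j, (c i * f i a) * (c j * f j a) := by
          refine Finset.sum_congr rfl fun a _ => ?_
          rw [sq, Finset.sum_mul_sum]
      _ = ∑ i, ∑ a, ∑ j, (c i * f i a) * (c j * f j a) := Finset.sum_comm
      _ = ∑ i, ∑ j, ∑ a, (c i * f i a) * (c j * f j a) := by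
          exact Finset.sum_congr rfl fun i _ => Finset.sum_comm
      _ = ∑ i, ∑ j, c i * c j * ∑ a, f i a * f j a := by
          refine Finset.sum_congr rfl fun i _ => Finset.sum_congr rfl fun j _ => ?_
          rw [Finset.mul_sum]
          exact Finset.sum_congr rfl fun a _ => by ring
      _ = ∑ i, (c i)^2 := by
          refine Finset.sum_congr rfl fun i _ => ?_
          rw [Finset.sum_eq_single i]
          · rw [horth i i]; simp [sq]
          · intro j _ hji
            rw [horth i j, if_neg (by exact fun h => hji h.symm)]
            ring
          · intro h; exact absurd (Finset.mem_univ i) h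
  have key : (0:ℝ) ≤ ∑ a, (x a - ∑ i, c i * f i a)^2 :=
    Finset.sum_nonneg fun a _ => sq_nonneg _
  have expand : ∑ a, (x a - ∑ i, c i * f i a)^2
      = (∑ a, (x a)^2) - 2 * (∑ a, (∑ i, c i * f i a) * x a)
        + ∑ a, (∑ i, c i * f i a)^2 := by
    rw [Finset.mul_sum, ← Finset.sum_sub_distrib, ← Finset.sum_add_distrib]
    refine Finset.sum_congr rfl fun a _ => by ring
  rw [expand, e1, e2] at key
  linarith

lemma tinner_smul_right {d1 d2 d3 : ℕ} (t : ℝ) (Y Z : Fin d1 → Fin d2 → Fin d3 → ℝ) :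
    tinner Y (fun a b c => t * Z a b c) = t * tinner Y Z := by
  unfold tinner
  rw [Finset.mul_sum]
  refine Finset.sum_congr rfl fun a _ => ?_
  rw [Finset.mul_sum]
  refine Finset.sum_congr rfl fun b _ => ?_
  rw [Finset.mul_sum]
  exact Finset.sum_congr rfl fun c _ => by ring

lemma sign_mul_self_eq_abs (x : ℝ) : Real.sign x * x = |x| := by
  rcases lt_trichotomy x 0 with h | h | h
  · rw [Real.sign_of_neg h, abs_of_neg h]; ring
  · simp [h]
  · rw [Real.sign_of_pos h, abs_of_pos h]; ring

lemma abs_sign_le_one (x : ℝ) : |Real.sign x| ≤ 1 := by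
  rcases lt_trichotomy x 0 with h | h | h
  · rw [Real.sign_of_neg h]; norm_num
  · simp [h]
  · rw [Real.sign_of_pos h]; norm_num

lemma sum_mul_sum' {d2 d3 : ℕ} (B : Fin d2 → ℝ) (C : Fin d3 → ℝ) :
    (∑ b, B b) * (∑ c, C c) = ∑ b, ∑ c, B b * C c := by
  rw [Finset.sum_mul_sum]

theorem nucNorm_biorthogonal {d1 d2 d3 r : ℕ}
    (lam : Fin r → ℝ) (u : Fin r → Fin d1 → ℝ) (v : Fin r → Fin d2 → ℝ)
    (w : Fin r → Fin d3 → ℝ)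
    (hlam : ∀ i, lam i ≠ 0)
    (hu : ∀ i j, (∑ a, u i a * u j a) = if i = j then 1 else 0)
    (hvw : ∀ i j, (∑ b, v i b * v j b) * (∑ c, w i c * w j c)
                    = if i = j then 1 else 0)
    (X : Fin d1 → Fin d2 → Fin d3 → ℝ)
    (hX : X = fun a b c => ∑ i, lam i * u i a * v i b * w i c) :
    nucNorm X = ∑ i, Real.sqrt (∑ b, ∑ c, (lam i * v i b * w i c) ^ 2) := by
  -- basic quantities
  set sv : Fin r → ℝ := fun i => ∑ b, v i b * v i b with hsv
  set sw : Fin r → ℝ := fun i => ∑ c, w i c * w i c with hsw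
  have hprod : ∀ i, sv i * sw i = 1 := fun i => by
    have := hvw i i; simpa using this
  have hsv0 : ∀ i, 0 ≤ sv i := fun i =>
    Finset.sum_nonneg fun b _ => mul_self_nonneg _
  have hsw0 : ∀ i, 0 ≤ sw i := fun i =>
    Finset.sum_nonneg fun c _ => mul_self_nonneg _
  have hsvpos : ∀ i, 0 < sv i := by
    intro i
    rcases (hsv0 i).lt_or_eq with h | h
    · exact h
    · exfalso; have := hprod i; rw [← h] at this; simp at this
  have hswpos : ∀ i, 0 < sw i := by
    intro i
    rcases (hsw0 i).lt_or_eq with h | h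
    · exact h
    · exfalso; have := hprod i; rw [← h] at this; simp at this
  set nv : Fin r → ℝ := fun i => Real.sqrt (sv i) with hnv
  set nw : Fin r → ℝ := fun i => Real.sqrt (sw i) with hnw
  have hnvpos : ∀ i, 0 < nv i := fun i => Real.sqrt_pos.2 (hsvpos i)
  have hnwpos : ∀ i, 0 < nw i := fun i => Real.sqrt_pos.2 (hswpos i)
  have hnvsq : ∀ i, nv i * nv i = sv i := fun i => Real.mul_self_sqrt (hsv0 i)
  have hnwsq : ∀ i, nw i * nw i = sw i := fun i => Real.mul_self_sqrt (hsw0 i)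
  have hnvw : ∀ i, nv i * nw i = 1 := fun i => by
    rw [hnv, hnw, ← Real.sqrt_mul (hsv0 i), hprod i, Real.sqrt_one]
  set Vn : Fin r → Fin d2 → ℝ := fun i b => v i b / nv i with hVn
  set Wn : Fin r → Fin d3 → ℝ := fun i c => w i c / nw i with hWn
  -- dot products of normalized vectors
  have hVdot : ∀ i j, (∑ b, Vn i b * Vn j b) = (∑ b, v i b * v j b) / (nv i * nv j) := by
    intro i j
    rw [Finset.sum_div]
    exact Finset.sum_congr rfl fun b _ => div_mul_div_comm _ _ _ _
  have hWdot : ∀ i j, (∑ c, Wn i c * Wn j c) = (∑ c, w i c * w j c) / (nw i * nw j) := by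
    intro i j
    rw [Finset.sum_div]
    exact Finset.sum_congr rfl fun c _ => div_mul_div_comm _ _ _ _
  -- unit norms
  have henu : ∀ i, _root_.enorm (u i) = 1 := by
    intro i
    have h1 : (∑ a, (u i a)^2) = 1 := by
      have := hu i i; rw [if_pos rfl] at this
      rw [← this]; exact Finset.sum_congr rfl fun a _ => sq (u i a)
    rw [_root_.enorm, h1, Real.sqrt_one]
  have henVn : ∀ i, _root_.enorm (Vn i) = 1 := by
    intro i
    have h1 : (∑ b, (Vn i b)^2) = 1 := by
      have : (∑ b, (Vn i b)^2) = sv i / (nv i * nv i) := by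
        rw [Finset.sum_div]
        refine Finset.sum_congr rfl fun b _ => ?_
        rw [hVn, sq, div_mul_div_comm]
      rw [this, hnvsq i, div_self (hsvpos i).ne']
    rw [_root_.enorm, h1, Real.sqrt_one]
  have henWn : ∀ i, _root_.enorm (Wn i) = 1 := by
    intro i
    have h1 : (∑ c, (Wn i c)^2) = 1 := by
      have : (∑ c, (Wn i c)^2) = sw i / (nw i * nw i) := by
        rw [Finset.sum_div]
        refine Finset.sum_congr rfl fun c _ => ?_
        rw [hWn, sq, div_mul_div_comm]
      rw [this, hnwsq i, div_self (hswpos i).ne']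
    rw [_root_.enorm, h1, Real.sqrt_one]
  -- RHS is ∑ |lam i|
  have hRHS : ∀ i, Real.sqrt (∑ b, ∑ c, (lam i * v i b * w i c) ^ 2) = |lam i| := by
    intro i
    have h1 : (∑ b, ∑ c, (lam i * v i b * w i c) ^ 2)
        = (lam i)^2 * (sv i * sw i) := by
      rw [show sv i * sw i = ∑ b, ∑ c, (v i b * v i b) * (w i c * w i c) from
        sum_mul_sum' _ _, Finset.mul_sum]
      refine Finset.sum_congr rfl fun b _ => ?_
      rw [Finset.mul_sum]
      exact Finset.sum_congr rfl fun c _ => by ring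
    rw [h1, hprod i, mul_one, Real.sqrt_sq_eq_abs]
  rw [show (∑ i, Real.sqrt (∑ b, ∑ c, (lam i * v i b * w i c) ^ 2)) = ∑ i, |lam i|
    from Finset.sum_congr rfl fun i _ => hRHS i]
  -- upper bound
  have hub : ∀ t ∈ {t : ℝ | ∃ Y, specNorm Y ≤ 1 ∧ t = tinner Y X},
      t ≤ ∑ i, |lam i| := by
    rintro t ⟨Y, hY, rfl⟩
    rw [hX, tinner_linear2]
    refine Finset.sum_le_sum fun j _ => ?_
    have hout : tOuter (u j) (v j) (w j)
        = fun a b c => (nv j * nw j) * tOuter (u j) (Vn j) (Wn j) a b c := by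
      funext a b c
      simp only [tOuter, hVn, hWn]
      field_simp
      rw [mul_assoc _ (nv j), mul_div_assoc,
        div_self (ne_of_gt (mul_pos (hnvpos j) (hnwpos j))), mul_one]
    rw [hout, tinner_smul_right, hnvw j, one_mul]
    calc lam j * tinner Y (tOuter (u j) (Vn j) (Wn j))
        ≤ |lam j * tinner Y (tOuter (u j) (Vn j) (Wn j))| := le_abs_self _
      _ = |lam j| * |tinner Y (tOuter (u j) (Vn j) (Wn j))| := abs_mul _ _
      _ ≤ |lam j| * 1 := mul_le_mul_of_nonneg_left
          (abs_tinner_le_one hY (le_of_eq (henu j)) (le_of_eq (henVn j))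
            (le_of_eq (henWn j))) (abs_nonneg _)
      _ = |lam j| := mul_one _
  -- the dual witness
  set Y0 : Fin d1 → Fin d2 → Fin d3 → ℝ :=
    fun a b c => ∑ i, Real.sign (lam i) * u i a * Vn i b * Wn i c with hY0
  have hY0spec : specNorm Y0 ≤ 1 := by
    refine csSup_le (specSet_nonempty _) ?_
    rintro t ⟨x, y, z, hx, hy, hz, rfl⟩
    rw [hY0, tinner_sumform]
    set A : Fin r → ℝ := fun i => ∑ a, u i a * x a with hA
    set B : Fin r → ℝ := fun i => ∑ b, Vn i b * y b with hB
    set C : Fin r → ℝ := fun i => ∑ c, Wn i c * z c with hC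
    have hAle : ∑ i, (A i)^2 ≤ 1 := le_trans (bessel' u x hu) (sum_sq_le_one' hx)
    have hBCle : ∑ i, (B i * C i)^2 ≤ 1 := by
      have horth2 : ∀ i j, (∑ p : Fin d2 × Fin d3,
          (Vn i p.1 * Wn i p.2) * (Vn j p.1 * Wn j p.2)) = if i = j then 1 else 0 := by
        intro i j
        rw [Fintype.sum_prod_type]
        have e : (∑ b, ∑ c, (Vn i b * Wn i c) * (Vn j b * Wn j c))
            = (∑ b, Vn i b * Vn j b) * (∑ c, Wn i c * Wn j c) := by
          rw [sum_mul_sum' (fun b => Vn i b * Vn j b) (fun c => Wn i c * Wn j c)]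
          exact Finset.sum_congr rfl fun b _ => Finset.sum_congr rfl fun c _ => by ring
        rw [e, hVdot i j, hWdot i j, div_mul_div_comm, hvw i j]
        by_cases h : i = j
        · subst h
          rw [if_pos rfl, hnvsq i, hnwsq i, hprod i, div_one]
        · rw [if_neg h, zero_div]
      have hb := bessel' (fun i p => Vn i p.1 * Wn i p.2)
        (fun p : Fin d2 × Fin d3 => y p.1 * z p.2) horth2
      have e1 : ∀ i, (∑ p : Fin d2 × Fin d3, Vn i p.1 * Wn i p.2 * (y p.1 * z p.2))
          = B i * C i := by
        intro i
        rw [Fintype.sum_prod_type, hB, hC,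
          sum_mul_sum' (fun b => Vn i b * y b) (fun c => Wn i c * z c)]
        exact Finset.sum_congr rfl fun b _ => Finset.sum_congr rfl fun c _ => by ring
      have e2 : (∑ p : Fin d2 × Fin d3, (y p.1 * z p.2)^2)
          = (∑ b, (y b)^2) * (∑ c, (z c)^2) := by
        rw [Fintype.sum_prod_type,
          sum_mul_sum' (fun b => (y b)^2) (fun c => (z c)^2)]
        exact Finset.sum_congr rfl fun b _ => Finset.sum_congr rfl fun c _ => by ring
      calc (∑ i, (B i * C i)^2) = ∑ i, (∑ p : Fin d2 × Fin d3,
            Vn i p.1 * Wn i p.2 * (y p.1 * z p.2))^2 := by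
            exact Finset.sum_congr rfl fun i _ => by rw [e1 i]
        _ ≤ ∑ p : Fin d2 × Fin d3, (y p.1 * z p.2)^2 := hb
        _ = (∑ b, (y b)^2) * (∑ c, (z c)^2) := e2
        _ ≤ 1 := mul_le_one₀ (sum_sq_le_one' hy)
            (Finset.sum_nonneg fun c _ => sq_nonneg _) (sum_sq_le_one' hz)
    have step1 : (∑ i, Real.sign (lam i) * A i * B i * C i)
        ≤ ∑ i, |A i| * |B i * C i| := by
      refine Finset.sum_le_sum fun i _ => ?_
      calc Real.sign (lam i) * A i * B i * C i
          ≤ |Real.sign (lam i) * A i * B i * C i| := le_abs_self _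
        _ = |Real.sign (lam i)| * (|A i| * |B i * C i|) := by
            rw [abs_mul (B i) (C i), abs_mul, abs_mul, abs_mul]; ring
        _ ≤ 1 * (|A i| * |B i * C i|) := mul_le_mul_of_nonneg_right
            (abs_sign_le_one _) (mul_nonneg (abs_nonneg _) (abs_nonneg _))
        _ = |A i| * |B i * C i| := one_mul _
    have hS0 : (0:ℝ) ≤ ∑ i, |A i| * |B i * C i| :=
      Finset.sum_nonneg fun i _ => mul_nonneg (abs_nonneg _) (abs_nonneg _)
    have hcs := Finset.sum_mul_sq_le_sq_mul_sq Finset.univ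
      (fun i => |A i|) (fun i => |B i * C i|)
    have hsq1 : (∑ i, |A i|^2) = ∑ i, (A i)^2 :=
      Finset.sum_congr rfl fun i _ => sq_abs _
    have hsq2 : (∑ i, |B i * C i|^2) = ∑ i, (B i * C i)^2 :=
      Finset.sum_congr rfl fun i _ => sq_abs _
    rw [hsq1, hsq2] at hcs
    have hA0 : (0:ℝ) ≤ ∑ i, (A i)^2 := Finset.sum_nonneg fun i _ => sq_nonneg _
    have hstep2 : (∑ i, |A i| * |B i * C i|) ≤ 1 := by
      nlinarith [hcs, hS0, hAle, hBCle, hA0]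
    exact le_trans step1 hstep2
  -- value at the witness
  have hval : tinner Y0 X = ∑ i, |lam i| := by
    rw [hX, hY0, tinner_linear2]
    refine Finset.sum_congr rfl fun j _ => ?_
    rw [tinner_sumform]
    rw [Finset.sum_eq_single j]
    · have h1 : (∑ b, Vn j b * v j b) = nv j := by
        have e : (∑ b, Vn j b * v j b) = sv j / nv j := by
          rw [Finset.sum_div]
          refine Finset.sum_congr rfl fun b _ => ?_
          rw [hVn, div_mul_eq_mul_div]
        rw [e, show sv j = nv j * nv j from (hnvsq j).symm,
          mul_div_assoc, div_self (hnvpos j).ne', mul_one]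
      have h2 : (∑ c, Wn j c * w j c) = nw j := by
        have e : (∑ c, Wn j c * w j c) = sw j / nw j := by
          rw [Finset.sum_div]
          refine Finset.sum_congr rfl fun c _ => ?_
          rw [hWn, div_mul_eq_mul_div]
        rw [e, show sw j = nw j * nw j from (hnwsq j).symm,
          mul_div_assoc, div_self (hnwpos j).ne', mul_one]
      have h3 := hu j j
      rw [if_pos rfl] at h3
      rw [h1, h2, h3]
      rw [show Real.sign (lam j) * 1 * nv j * nw j
        = Real.sign (lam j) * (nv j * nw j) by ring, hnvw j, mul_one]
      rw [mul_comm]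
      exact sign_mul_self_eq_abs (lam j)
    · intro i _ hij
      have h3 := hu i j
      rw [if_neg hij] at h3
      rw [h3]
      ring
    · intro h; exact absurd (Finset.mem_univ j) h
  -- zero is in the dual set
  have hzero : (0:ℝ) ∈ {t : ℝ | ∃ Y, specNorm Y ≤ 1 ∧ t = tinner Y X} := by
    refine ⟨fun _ _ _ => 0, ?_, ?_⟩
    · refine le_trans (csSup_le (specSet_nonempty _) ?_) le_rfl
      rintro t ⟨x, y, z, _, _, _, rfl⟩
      simp [tinner]
    · simp [tinner]
  -- conclude
  rw [nucNorm]
  apply le_antisymm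
  · exact csSup_le ⟨0, hzero⟩ hub
  · exact le_csSup ⟨∑ i, |lam i|, hub⟩ ⟨Y0, hY0spec, hval.symm⟩
end

section
/- Let W = Σ_{i=1}^r u_i ⊗ M_i where u_1,…,u_r ∈ ℝ^{d1} are orthonormal and M_1,…,M_r ∈ ℝ^{d2×d3} satisfy ⟨M_j, M_k⟩ = 0 for j ≠ k. If the tensor spectral norm of W is at most 1, then each matrix spectral norm ‖M_k‖ ≤ 1, and if additionally each M_k has rank at most r2, then ‖W‖_HS² ≤ r · r2. -/
open scoped BigOperators

noncomputable def matSpecNorm {d2 d3 : ℕ} (M : Fin d2 → Fin d3 → ℝ) : ℝ :=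
  sSup {t : ℝ | ∃ v w, enorm v ≤ 1 ∧ enorm w ≤ 1 ∧
    t = ∑ b, ∑ c, M b c * v b * w c}

section Helpers
open Matrix

lemma coord_le {d : ℕ} {u : Fin d → ℝ} (h : _root_.enorm u ≤ 1) (a : Fin d) : |u a| ≤ 1 := by
  have h1 : (u a)^2 ≤ ∑ i, (u i)^2 :=
    Finset.single_le_sum (f := fun i => (u i)^2) (fun i _ => sq_nonneg _) (Finset.mem_univ a)
  have h2 := Real.sqrt_le_sqrt h1
  rw [Real.sqrt_sq_eq_abs] at h2
  exact h2.trans h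

lemma bddAbove_mat {d2 d3 : ℕ} (M : Fin d2 → Fin d3 → ℝ) :
    BddAbove {t : ℝ | ∃ v w, _root_.enorm v ≤ 1 ∧ _root_.enorm w ≤ 1 ∧
      t = ∑ b, ∑ c, M b c * v b * w c} := by
  refine ⟨∑ b, ∑ c, |M b c|, ?_⟩
  rintro t ⟨v, w, hv, hw, rfl⟩
  refine le_trans (le_abs_self _) ?_
  refine (Finset.abs_sum_le_sum_abs _ _).trans (Finset.sum_le_sum fun b _ => ?_)
  refine (Finset.abs_sum_le_sum_abs _ _).trans (Finset.sum_le_sum fun c _ => ?_)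
  have h1 : |v b| ≤ 1 := coord_le hv b
  have h2 : |w c| ≤ 1 := coord_le hw c
  rw [abs_mul, abs_mul]
  have h3 : |M b c| * |v b| ≤ |M b c| := mul_le_of_le_one_right (abs_nonneg _) h1
  exact (mul_le_of_le_one_right (mul_nonneg (abs_nonneg _) (abs_nonneg _)) h2).trans h3

lemma le_mat {d2 d3 : ℕ} (M : Fin d2 → Fin d3 → ℝ) (v : Fin d2 → ℝ) (w : Fin d3 → ℝ)
    (hv : _root_.enorm v ≤ 1) (hw : _root_.enorm w ≤ 1) :
    (∑ b, ∑ c, M b c * v b * w c) ≤ matSpecNorm M :=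
  le_csSup (bddAbove_mat M) ⟨v, w, hv, hw, rfl⟩

lemma huv2 {r d1 : ℕ} (u : Fin r → Fin d1 → ℝ)
    (hu : ∀ i j, (∑ a, u i a * u j a) = if i = j then 1 else 0)
    (c d : Fin r → ℝ) :
    ∑ a, (∑ i, u i a * c i) * (∑ j, u j a * d j) = ∑ i, c i * d i := by
  calc ∑ a, (∑ i, u i a * c i) * (∑ j, u j a * d j)
      = ∑ a, ∑ i, ∑ j, (c i * d j) * (u i a * u j a) := by
        refine Finset.sum_congr rfl fun a _ => ?_
        rw [Finset.sum_mul_sum]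
        exact Finset.sum_congr rfl fun i _ => Finset.sum_congr rfl fun j _ => by ring
    _ = ∑ i, ∑ j, ∑ a, (c i * d j) * (u i a * u j a) := by
        rw [Finset.sum_comm]
        exact Finset.sum_congr rfl fun i _ => Finset.sum_comm
    _ = ∑ i, ∑ j, (c i * d j) * ∑ a, u i a * u j a := by
        simp [Finset.mul_sum]
    _ = ∑ i, c i * d i := by
        simp only [hu, mul_ite, mul_one, mul_zero]
        simp


lemma bddAbove_spec {d1 d2 d3 : ℕ} (X : Fin d1 → Fin d2 → Fin d3 → ℝ) :
    BddAbove {t : ℝ | ∃ u v w, _root_.enorm u ≤ 1 ∧ _root_.enorm v ≤ 1 ∧ _root_.enorm w ≤ 1 ∧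
      t = tinner X (tOuter u v w)} := by
  refine ⟨∑ a, ∑ b, ∑ c, |X a b c|, ?_⟩
  rintro t ⟨u, v, w, hu, hv, hw, rfl⟩
  refine le_trans (le_abs_self _) ?_
  simp only [tinner, tOuter]
  refine (Finset.abs_sum_le_sum_abs _ _).trans (Finset.sum_le_sum fun a _ => ?_)
  refine (Finset.abs_sum_le_sum_abs _ _).trans (Finset.sum_le_sum fun b _ => ?_)
  refine (Finset.abs_sum_le_sum_abs _ _).trans (Finset.sum_le_sum fun c _ => ?_)
  rw [abs_mul, abs_mul, abs_mul]
  have h1 : |u a| ≤ 1 := coord_le hu a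
  have h2 : |v b| ≤ 1 := coord_le hv b
  have h3 : |w c| ≤ 1 := coord_le hw c
  have h12 : |u a| * |v b| ≤ 1 := mul_le_one₀ h1 (abs_nonneg _) h2
  have h123 : |u a| * |v b| * |w c| ≤ 1 := mul_le_one₀ h12 (abs_nonneg _) h3
  exact mul_le_of_le_one_right (abs_nonneg _) h123


lemma frob_le {d2 d3 r2 : ℕ} (M : Fin d2 → Fin d3 → ℝ)
    (hs : matSpecNorm M ≤ 1) (hr : (Matrix.of M).rank ≤ r2) :
    (∑ b, ∑ c, (M b c)^2) ≤ (r2 : ℝ) := by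
  classical
  set A : Matrix (Fin d2) (Fin d3) ℝ := Matrix.of M with hA
  have hB : (Aᵀ * A).IsHermitian := by
    ext c c'
    simp only [Matrix.conjTranspose_apply, Matrix.mul_apply, Matrix.transpose_apply, star_trivial]
    exact Finset.sum_congr rfl fun b _ => mul_comm _ _
  set lam := hB.eigenvalues with hlamdef
  -- per-eigenvalue facts
  have key : ∀ i, 0 ≤ lam i ∧ lam i ≤ 1 := by
    intro i
    set x : Fin d3 → ℝ := ⇑(hB.eigenvectorBasis i) with hx
    have hmv : (Aᵀ * A) *ᵥ x = lam i • x := hB.mulVec_eigenvectorBasis i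
    have hxn : ∑ c, (x c)^2 = 1 := by
      have h := hB.eigenvectorBasis.orthonormal.1 i
      rw [EuclideanSpace.norm_eq] at h
      have hnn : (0:ℝ) ≤ ∑ c, ‖hB.eigenvectorBasis i c‖^2 :=
        Finset.sum_nonneg fun c _ => sq_nonneg _
      have h2 : ∑ c, ‖hB.eigenvectorBasis i c‖^2 = 1 := by
        calc ∑ c, ‖hB.eigenvectorBasis i c‖^2
            = (Real.sqrt (∑ c, ‖hB.eigenvectorBasis i c‖^2))^2 := (Real.sq_sqrt hnn).symm
          _ = 1 := by rw [h]; norm_num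
      simpa [hx, Real.norm_eq_abs, sq_abs] using h2
    have hmvx : ∀ c, ((Aᵀ * A) *ᵥ x) c = ∑ b, M b c * (∑ c', M b c' * x c') := by
      intro c
      calc ((Aᵀ * A) *ᵥ x) c = ∑ c', (∑ b, M b c * M b c') * x c' := by
            simp only [Matrix.mulVec, dotProduct, Matrix.mul_apply,
              Matrix.transpose_apply, hA, Matrix.of_apply]
        _ = ∑ c', ∑ b, (M b c * M b c') * x c' := by simp [Finset.sum_mul]
        _ = ∑ b, ∑ c', (M b c * M b c') * x c' := Finset.sum_comm
        _ = ∑ b, M b c * (∑ c', M b c' * x c') := by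
            refine Finset.sum_congr rfl fun b _ => ?_
            rw [Finset.mul_sum]
            exact Finset.sum_congr rfl fun c' _ => by ring
    have hlam : lam i = ∑ b, (∑ c', M b c' * x c')^2 := by
      have h1 : ∑ c, x c * ((Aᵀ * A) *ᵥ x) c = lam i := by
        rw [hmv]
        calc ∑ c, x c * (lam i • x) c = lam i * ∑ c, (x c)^2 := by
              rw [Finset.mul_sum]
              exact Finset.sum_congr rfl fun c _ => by
                simp [Pi.smul_apply, smul_eq_mul]; ring
          _ = lam i := by rw [hxn, mul_one]
      have h2 : ∑ c, x c * ((Aᵀ * A) *ᵥ x) c = ∑ b, (∑ c', M b c' * x c')^2 := by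
        simp only [hmvx]
        calc ∑ c, x c * ∑ b, M b c * (∑ c', M b c' * x c')
            = ∑ c, ∑ b, (M b c * x c) * (∑ c', M b c' * x c') := by
              refine Finset.sum_congr rfl fun c _ => ?_
              rw [Finset.mul_sum]
              exact Finset.sum_congr rfl fun b _ => by ring
          _ = ∑ b, ∑ c, (M b c * x c) * (∑ c', M b c' * x c') := Finset.sum_comm
          _ = ∑ b, (∑ c', M b c' * x c')^2 := by
              refine Finset.sum_congr rfl fun b _ => ?_
              rw [← Finset.sum_mul, sq]
      rw [← h1, h2]
    constructor
    · rw [hlam]; exact Finset.sum_nonneg fun b _ => sq_nonneg _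
    · set s := Real.sqrt (∑ b, (∑ c', M b c' * x c')^2) with hsdef
      have hsum_nn : 0 ≤ ∑ b, (∑ c', M b c' * x c')^2 :=
        Finset.sum_nonneg fun b _ => sq_nonneg _
      have hs2 : s^2 = lam i := by rw [hsdef, Real.sq_sqrt hsum_nn, hlam]
      by_cases hz : s = 0
      · rw [← hs2, hz]; norm_num
      · have hspos : 0 < s := lt_of_le_of_ne (Real.sqrt_nonneg _) (Ne.symm hz)
        have hvnorm : _root_.enorm (fun b => (∑ c', M b c' * x c') / s) ≤ 1 := by
          unfold _root_.enorm
          have : ∑ b, ((∑ c', M b c' * x c') / s)^2 = 1 := by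
            have : ∑ b, ((∑ c', M b c' * x c') / s)^2
                = (∑ b, (∑ c', M b c' * x c')^2) / s^2 := by
              rw [Finset.sum_div]
              exact Finset.sum_congr rfl fun b _ => by rw [div_pow]
            rw [this, ← hlam, ← hs2]
            field_simp
          rw [this, Real.sqrt_one]
        have hwnorm : _root_.enorm x ≤ 1 := by
          unfold _root_.enorm; rw [hxn, Real.sqrt_one]
        have hle := le_mat M (fun b => (∑ c', M b c' * x c') / s) x hvnorm hwnorm
        have hval : (∑ b, ∑ c, M b c * ((∑ c', M b c' * x c') / s) * x c) = s := by
          calc ∑ b, ∑ c, M b c * ((∑ c', M b c' * x c') / s) * x c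
              = ∑ b, ((∑ c', M b c' * x c') / s) * ∑ c, M b c * x c := by
                refine Finset.sum_congr rfl fun b _ => ?_
                rw [Finset.mul_sum]
                exact Finset.sum_congr rfl fun c _ => by ring
            _ = (∑ b, (∑ c', M b c' * x c')^2) / s := by
                rw [Finset.sum_div]
                refine Finset.sum_congr rfl fun b _ => ?_
                rw [sq]; ring
            _ = s := by rw [← hlam, ← hs2, sq, mul_div_assoc, div_self hz, mul_one]
        rw [hval] at hle
        have hs1 : s ≤ 1 := hle.trans hs
        calc lam i = s^2 := hs2.symm
          _ ≤ 1 := pow_le_one₀ (le_of_lt hspos) hs1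
  -- trace identity
  have htr : ∑ c, lam c = ∑ b, ∑ c, (M b c)^2 := by
    have t2 : (Aᵀ * A).trace = ∑ b, ∑ c, (M b c)^2 := by
      calc (Aᵀ * A).trace = ∑ c, ∑ b, M b c * M b c := by
            simp only [Matrix.trace, Matrix.diag_apply, Matrix.mul_apply,
              Matrix.transpose_apply, hA, Matrix.of_apply]
        _ = ∑ b, ∑ c, M b c * M b c := Finset.sum_comm
        _ = ∑ b, ∑ c, (M b c)^2 := by
            exact Finset.sum_congr rfl fun b _ => Finset.sum_congr rfl fun c _ => (sq _).symm
    have t1 : (Aᵀ * A).trace = ∑ c, lam c := by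
      have hsp := hB.spectral_theorem
      set U : Matrix (Fin d3) (Fin d3) ℝ := (Matrix.IsHermitian.eigenvectorUnitary hB : Matrix (Fin d3) (Fin d3) ℝ) with hU
      have hUmem := (Matrix.IsHermitian.eigenvectorUnitary hB).2
      have hUU : star U * U = 1 := Matrix.mem_unitaryGroup_iff'.mp hUmem
      calc (Aᵀ * A).trace
          = (U * Matrix.diagonal (RCLike.ofReal ∘ lam) * star U).trace := by rw [hsp]; rfl
        _ = (star U * U * Matrix.diagonal (RCLike.ofReal ∘ lam)).trace := by
            rw [Matrix.trace_mul_cycle]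
        _ = (Matrix.diagonal (RCLike.ofReal ∘ lam)).trace := by rw [hUU, one_mul]
        _ = ∑ c, lam c := by
            rw [Matrix.trace_diagonal]
            exact Finset.sum_congr rfl fun c _ => rfl
    rw [← t1, t2]
  -- rank bound
  have hcard : (Finset.univ.filter (fun i => lam i ≠ 0)).card ≤ r2 := by
    have h1 := hB.rank_eq_card_non_zero_eigs
    have h2 : (Aᵀ * A).rank = A.rank := Matrix.rank_transpose_mul_self A
    rw [Fintype.card_subtype] at h1
    rw [hlamdef]
    omega
  calc ∑ b, ∑ c, (M b c)^2 = ∑ c, lam c := htr.symm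
    _ = ∑ c ∈ Finset.univ.filter (fun i => lam i ≠ 0), lam c := by
        rw [Finset.sum_filter_of_ne]
        intro c _ h; exact h
    _ ≤ (Finset.univ.filter (fun i => lam i ≠ 0)).card • (1:ℝ) := by
        exact Finset.sum_le_card_nsmul _ _ _ fun c _ => (key c).2
    _ = ((Finset.univ.filter (fun i => lam i ≠ 0)).card : ℝ) := by simp
    _ ≤ (r2 : ℝ) := by exact_mod_cast hcard

end Helpers

theorem slices_of_bounded_tensor {d1 d2 d3 r r2 : ℕ}
    (u : Fin r → Fin d1 → ℝ) (M : Fin r → Fin d2 → Fin d3 → ℝ)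
    (hu : ∀ i j, (∑ a, u i a * u j a) = if i = j then 1 else 0)
    (hM : ∀ j k, j ≠ k → (∑ b, ∑ c, M j b c * M k b c) = 0)
    (W : Fin d1 → Fin d2 → Fin d3 → ℝ)
    (hW : W = fun a b c => ∑ i, u i a * M i b c)
    (hspec : specNorm W ≤ 1) :
    (∀ k, matSpecNorm (M k) ≤ 1) ∧
    ((∀ k, (Matrix.of (M k)).rank ≤ r2) → tinner W W ≤ (r : ℝ) * r2) := by
  have hpart1 : ∀ k, matSpecNorm (M k) ≤ 1 := by
    intro k
    apply Real.sSup_le _ zero_le_one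
    rintro t ⟨v, w, hv, hw, rfl⟩
    have huk : _root_.enorm (u k) ≤ 1 := by
      unfold _root_.enorm
      have h : ∑ a, (u k a)^2 = 1 := by simpa [pow_two] using hu k k
      rw [h, Real.sqrt_one]
    have h1 : tinner W (tOuter (u k) v w) = ∑ b, ∑ c, M k b c * v b * w c := by
      rw [hW]; simp only [tinner, tOuter]
      rw [Finset.sum_comm]
      refine Finset.sum_congr rfl fun b _ => ?_
      rw [Finset.sum_comm]
      refine Finset.sum_congr rfl fun c _ => ?_
      have e : ∀ a : Fin d1, (∑ j, u j a * (if j = k then v b * w c else 0))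
          = u k a * v b * w c := by
        intro a
        simp only [mul_ite, mul_zero, Finset.sum_ite_eq', Finset.mem_univ, if_true]
        ring
      calc ∑ a, (∑ i, u i a * M i b c) * (u k a * v b * w c)
          = ∑ a, (∑ i, u i a * M i b c) * (∑ j, u j a * (if j = k then v b * w c else 0)) := by
            refine Finset.sum_congr rfl fun a _ => ?_
            rw [e a]
        _ = ∑ i, M i b c * (if i = k then v b * w c else 0) := huv2 u hu _ _
        _ = M k b c * v b * w c := by
            simp only [mul_ite, mul_zero, Finset.sum_ite_eq', Finset.mem_univ, if_true]
            ring
    have hmem : (∑ b, ∑ c, M k b c * v b * w c) ∈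
        {t : ℝ | ∃ u' v' w', _root_.enorm u' ≤ 1 ∧ _root_.enorm v' ≤ 1 ∧ _root_.enorm w' ≤ 1 ∧
          t = tinner W (tOuter u' v' w')} := ⟨u k, v, w, huk, hv, hw, h1.symm⟩
    exact (le_csSup (bddAbove_spec W) hmem).trans hspec
  refine ⟨hpart1, fun hrank => ?_⟩
  have step : tinner W W = ∑ b, ∑ c, ∑ i, (M i b c)^2 := by
    rw [hW]; simp only [tinner]
    rw [Finset.sum_comm]
    refine Finset.sum_congr rfl fun b _ => ?_
    rw [Finset.sum_comm]
    refine Finset.sum_congr rfl fun c _ => ?_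
    rw [huv2 u hu (fun i => M i b c) (fun i => M i b c)]
    exact Finset.sum_congr rfl fun i _ => (sq (M i b c)).symm
  have swap : ∑ b, ∑ c, ∑ i, (M i b c)^2 = ∑ i, ∑ b, ∑ c, (M i b c)^2 := by
    rw [show (∑ b, ∑ c, ∑ i, (M i b c)^2) = ∑ b, ∑ i, ∑ c, (M i b c)^2 from
      Finset.sum_congr rfl fun b _ => Finset.sum_comm]
    exact Finset.sum_comm
  rw [step, swap]
  have hbound : ∀ i, (∑ b, ∑ c, (M i b c)^2) ≤ (r2 : ℝ) :=
    fun i => frob_le (M i) (hpart1 i) (hrank i)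
  calc ∑ i, ∑ b, ∑ c, (M i b c)^2 ≤ ∑ _i : Fin r, (r2 : ℝ) :=
        Finset.sum_le_sum fun i _ => hbound i
    _ = (r : ℝ) * r2 := by
        rw [Finset.sum_const, Finset.card_univ, Fintype.card_fin, nsmul_eq_mul]
end

section
/- For every positive integer d and integer m ≥ 1, define C'_{m,d} = min over unit vectors a ∈ ℝ^d of max over u ∈ B'_{m,d} of a^⊤u, where B'_{m,d} = {u ∈ ℝ^d : ‖u‖ ≤ 1 and each coordinate u_i satisfies u_i² ∈ [0,1] \ (0, 2^{-m})}. Then C'_{m,d} ≥ ((2^m − 1)/(2^m + d − 2))^{1/2}. -/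
def thinBall (m d : ℕ) : Set (Fin d → ℝ) :=
  {u | _root_.enorm u ≤ 1 ∧
    ∀ i, u i ^ 2 ∈ Set.Icc (0 : ℝ) 1 \ Set.Ioo (0 : ℝ) ((2 : ℝ) ^ m)⁻¹}

theorem thinning_lower_bound {m d : ℕ} (hm : 1 ≤ m) (hd : 1 ≤ d)
    (a : Fin d → ℝ) (ha : _root_.enorm a = 1) :
    Real.sqrt (((2 : ℝ) ^ m - 1) / ((2 : ℝ) ^ m + d - 2))
      ≤ sSup {t : ℝ | ∃ u ∈ thinBall m d, t = ∑ i, a i * u i} := by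
  classical
  set M : ℝ := (2:ℝ)^m with hMdef
  have hM2 : (2:ℝ) ≤ M := by
    calc (2:ℝ) = 2^1 := by ring
    _ ≤ 2^m := pow_le_pow_right₀ (by norm_num) hm
  have hd1 : (1:ℝ) ≤ (d:ℝ) := by exact_mod_cast hd
  have hDpos : 0 < M + (d:ℝ) - 2 := by linarith
  have htot : ∑ i, a i ^ 2 = 1 := by
    have h0 : 0 ≤ ∑ i, a i ^ 2 := Finset.sum_nonneg (fun i _ => sq_nonneg _)
    have h1 : Real.sqrt (∑ i, a i ^ 2) = 1 := ha
    nlinarith [Real.sq_sqrt h0]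
  -- feasible sets
  let P : Finset (Fin d) → Prop := fun S => S.Nonempty ∧
    (∀ i ∈ S, ∀ j, j ∉ S → a j ^ 2 ≤ a i ^ 2) ∧
    (∀ i ∈ S, ∑ k ∈ S, a k ^ 2 ≤ M * a i ^ 2)
  let F : Finset (Finset (Fin d)) := Finset.univ.filter P
  -- F is nonempty : take a singleton of a maximizer of a i ^ 2
  have hFne : F.Nonempty := by
    obtain ⟨i0, -, hi0⟩ := Finset.exists_max_image Finset.univ (fun i => a i ^ 2)
      (Finset.univ_nonempty_iff.mpr ⟨⟨0, hd⟩⟩)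
    refine ⟨{i0}, Finset.mem_filter.mpr ⟨Finset.mem_univ _, ⟨i0, Finset.mem_singleton_self _⟩,
      ?_, ?_⟩⟩
    · intro i hi j _
      rw [Finset.mem_singleton] at hi; rw [hi]
      exact hi0 j (Finset.mem_univ _)
    · intro i hi
      rw [Finset.mem_singleton] at hi; rw [hi, Finset.sum_singleton]
      nlinarith [sq_nonneg (a i0)]
  obtain ⟨S, hSF, hSmax⟩ := Finset.exists_max_image F (fun S => ∑ k ∈ S, a k ^ 2) hFne
  obtain ⟨-, hScne, hSdown, hSsum⟩ : S ∈ Finset.univ ∧ P S := Finset.mem_filter.mp hSF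
  set s : ℝ := ∑ k ∈ S, a k ^ 2 with hsdef
  have hs_nonneg : 0 ≤ s := Finset.sum_nonneg (fun i _ => sq_nonneg _)
  -- the key lower bound on s
  have hs_target : (M - 1) / (M + (d:ℝ) - 2) ≤ s := by
    by_contra hlt
    push_neg at hlt
    have hlt' : s * (M + (d:ℝ) - 2) < M - 1 := (lt_div_iff₀ hDpos).mp hlt
    have hs1 : s < 1 := by
      have : (M - 1) / (M + (d:ℝ) - 2) ≤ 1 := by
        rw [div_le_one hDpos]; linarith
      linarith
    have hcompl : ∑ k ∈ Sᶜ, a k ^ 2 = 1 - s := by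
      have := Finset.sum_add_sum_compl S (fun k => a k ^ 2)
      rw [htot] at this; linarith
    have hcne : Sᶜ.Nonempty := by
      rw [Finset.nonempty_iff_ne_empty]
      intro h
      rw [h, Finset.sum_empty] at hcompl; linarith
    obtain ⟨j, hjc, hjmax⟩ := Finset.exists_max_image Sᶜ (fun k => a k ^ 2) hcne
    have hjS : j ∉ S := Finset.mem_compl.mp hjc
    -- average bound
    have havg : 1 - s ≤ (Sᶜ.card : ℝ) * a j ^ 2 := by
      rw [← hcompl]
      calc ∑ k ∈ Sᶜ, a k ^ 2 ≤ ∑ _k ∈ Sᶜ, a j ^ 2 :=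
            Finset.sum_le_sum (fun k hk => hjmax k hk)
        _ = (Sᶜ.card : ℝ) * a j ^ 2 := by rw [Finset.sum_const, nsmul_eq_mul]
    have hcard : (Sᶜ.card : ℝ) ≤ (d:ℝ) - 1 := by
      have h1 : 1 ≤ S.card := Finset.card_pos.mpr hScne
      have h2 : Sᶜ.card = d - S.card := by
        rw [Finset.card_compl, Fintype.card_fin]
      have h3 : Sᶜ.card ≤ d - 1 := by omega
      have : ((d - 1 : ℕ) : ℝ) = (d:ℝ) - 1 := by
        push_cast [Nat.cast_sub hd]; ring
      rw [← this]; exact_mod_cast h3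
    have haj_pos : 0 < a j ^ 2 := by nlinarith [sq_nonneg (a j), Finset.card_compl S]
    have hcard' : 1 - s ≤ ((d:ℝ) - 1) * a j ^ 2 := by nlinarith
    -- key inequality
    have hkey : s + a j ^ 2 ≤ M * a j ^ 2 := by nlinarith
    -- S ∪ {j} is feasible with larger sum: contradiction
    have hins : insert j S ∈ F := by
      refine Finset.mem_filter.mpr ⟨Finset.mem_univ _, ⟨j, Finset.mem_insert_self _ _⟩, ?_, ?_⟩
      · intro i hi k hk
        rcases Finset.mem_insert.mp hi with rfl | hi
        · exact hjmax k (Finset.mem_compl.mpr (fun h => hk (Finset.mem_insert_of_mem h)))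
        · exact hSdown i hi k (fun h => hk (Finset.mem_insert_of_mem h))
      · intro i hi
        rw [Finset.sum_insert hjS]
        rcases Finset.mem_insert.mp hi with rfl | hi
        · linarith [hkey]
        · have hji : a j ^ 2 ≤ a i ^ 2 := hSdown i hi j hjS
          nlinarith
    have := hSmax (insert j S) hins
    rw [Finset.sum_insert hjS] at this
    simp only [← hsdef] at this
    linarith
  have hs_pos : 0 < s := by
    have : 0 < (M - 1) / (M + (d:ℝ) - 2) := div_pos (by linarith) hDpos
    linarith
  -- build the witness u
  set u : Fin d → ℝ := fun i => if i ∈ S then a i / Real.sqrt s else 0 with hudef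
  have hsq : Real.sqrt s ^ 2 = s := Real.sq_sqrt hs_nonneg
  have hsqrt_pos : 0 < Real.sqrt s := Real.sqrt_pos.mpr hs_pos
  have husq : ∀ i, u i ^ 2 = if i ∈ S then a i ^ 2 / s else 0 := by
    intro i
    by_cases h : i ∈ S <;> simp [hudef, h, div_pow, hsq]
  have hsumu : ∑ i, u i ^ 2 = 1 := by
    have : ∑ i, u i ^ 2 = ∑ i ∈ S, a i ^ 2 / s := by
      rw [Finset.sum_congr rfl (fun i _ => husq i)]
      rw [Finset.sum_ite_mem, Finset.univ_inter]
    rw [this, ← Finset.sum_div, ← hsdef, div_self (ne_of_gt hs_pos)]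
  have huthin : u ∈ thinBall m d := by
    constructor
    · show Real.sqrt (∑ i, u i ^ 2) ≤ 1
      rw [hsumu, Real.sqrt_one]
    · intro i
      by_cases h : i ∈ S
      · have h1 : a i ^ 2 ≤ s := Finset.single_le_sum (fun k _ => sq_nonneg (a k)) h
        have h2 : s ≤ M * a i ^ 2 := hSsum i h
        have h3 : M⁻¹ ≤ a i ^ 2 / s := by
          rw [le_div_iff₀ hs_pos, inv_mul_le_iff₀ (by linarith : (0:ℝ) < M)]
          linarith
        refine ⟨⟨?_, ?_⟩, ?_⟩
        · rw [husq i, if_pos h]; positivity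
        · rw [husq i, if_pos h]
          rw [div_le_one hs_pos]; exact h1
        · rw [husq i, if_pos h]
          intro hmem
          exact absurd h3 (not_le.mpr hmem.2)
      · refine ⟨⟨?_, ?_⟩, ?_⟩
        · rw [husq i, if_neg h]
        · rw [husq i, if_neg h]; norm_num
        · rw [husq i, if_neg h]
          intro hmem
          exact lt_irrefl 0 hmem.1
  have hdot : ∑ i, a i * u i = Real.sqrt s := by
    have h1 : ∀ i, a i * u i = if i ∈ S then a i ^ 2 / Real.sqrt s else 0 := by
      intro i
      by_cases h : i ∈ S
      · simp only [hudef, if_pos h]; ring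
      · simp [hudef, h]
    rw [Finset.sum_congr rfl (fun i _ => h1 i), Finset.sum_ite_mem, Finset.univ_inter,
      ← Finset.sum_div, ← hsdef, div_eq_iff (ne_of_gt hsqrt_pos)]
    exact (Real.mul_self_sqrt hs_nonneg).symm
  -- conclude
  have hmem : Real.sqrt s ∈ {t : ℝ | ∃ u ∈ thinBall m d, t = ∑ i, a i * u i} :=
    ⟨u, huthin, hdot.symm⟩
  have hbdd : BddAbove {t : ℝ | ∃ u ∈ thinBall m d, t = ∑ i, a i * u i} := by
    refine ⟨1, fun t ht => ?_⟩
    obtain ⟨v, ⟨hv1, -⟩, rfl⟩ := ht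
    calc ∑ i, a i * v i
        ≤ Real.sqrt (∑ i, a i ^ 2) * Real.sqrt (∑ i, v i ^ 2) :=
          Real.sum_mul_le_sqrt_mul_sqrt _ _ _
      _ = 1 * Real.sqrt (∑ i, v i ^ 2) := by rw [htot, Real.sqrt_one]
      _ ≤ 1 * 1 := by
          have : Real.sqrt (∑ i, v i ^ 2) ≤ 1 := hv1
          linarith
      _ = 1 := by ring
  calc Real.sqrt ((M - 1) / (M + (d:ℝ) - 2)) ≤ Real.sqrt s :=
        Real.sqrt_le_sqrt hs_target
    _ ≤ _ := le_csSup hbdd hmem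
end
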